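/- Let f ∈ ℱ₁ and ε > 0. Then there exists a real polynomial p satisfying (i) sup_{x∈[0,1]} |p(x) − f(x)| < ε, (ii) 0 < p(x) < 1 for all x ∈ (0,1), (iii) p(0) = 0, and (iv) p(1) = 1. -/

import Mathlib

open Polynomial

open unitInterval
theorem stmt_11 (f : ℝ → ℝ) (hf : ContinuousOn f (Set.Icc (0:ℝ) 1))
    (hf0 : f 0 = 0) (hf1 : f 1 = 1)
    (hf01 : ∀ x ∈ Set.Icc (0:ℝ) 1, f x ∈ Set.Icc (0:ℝ) 1)
    (ε : ℝ) (hε : 0 < ε) :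
    ∃ p : Polynomial ℝ,
      sSup ((fun x => |p.eval x - f x|) '' Set.Icc (0:ℝ) 1) < ε ∧
      (∀ x ∈ Set.Ioo (0:ℝ) 1, p.eval x ∈ Set.Ioo (0:ℝ) 1) ∧
      p.eval 0 = 0 ∧ p.eval 1 = 1 := by
  set F : C(I, ℝ) := ⟨(Set.Icc (0:ℝ) 1).restrict f, hf.restrict⟩ with hF
  have hBA := bernsteinApproximation_uniform F
  rw [Metric.tendsto_atTop] at hBA
  obtain ⟨N, hN⟩ := hBA (ε/2) (by positivity)
  set n : ℕ := N + 1 with hn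
  have hdist : dist (bernsteinApproximation n F) F < ε/2 := hN n (Nat.le_succ N)
  set p : Polynomial ℝ :=
    ∑ k : Fin (n+1), Polynomial.C (f ((k:ℝ)/n)) * bernsteinPolynomial ℝ n k with hp
  have hpeval : ∀ x : ℝ, p.eval x
      = ∑ k : Fin (n+1), f ((k:ℝ)/n) * (bernsteinPolynomial ℝ n k).eval x := by
    intro x
    simp [hp, Polynomial.eval_finset_sum]
  have hz : ∀ k : Fin (n+1), (bernstein.z k : ℝ) = (k:ℝ)/n := fun k => rfl
  have hFz : ∀ k : Fin (n+1), F (bernstein.z k) = f ((k:ℝ)/n) := fun k => rfl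
  have hpI : ∀ x : I, p.eval (x:ℝ) = bernsteinApproximation n F x := by
    intro x
    rw [hpeval, bernsteinApproximation.apply]
    refine Finset.sum_congr rfl fun k _ => ?_
    rw [hFz]
    rw [smul_eq_mul, mul_comm]
    congr 1
  refine ⟨p, ?_, ?_, ?_, ?_⟩
  · -- sup bound
    have hle : ∀ y ∈ (fun x => |p.eval x - f x|) '' Set.Icc (0:ℝ) 1, y ≤ ε/2 := by
      rintro y ⟨x, hx, rfl⟩
      show |p.eval x - f x| ≤ ε/2
      have : p.eval x - f x = (bernsteinApproximation n F - F) (⟨x, hx⟩ : I) := by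
        simp [hpI ⟨x, hx⟩]
        rfl
      rw [this]
      calc |(bernsteinApproximation n F - F) (⟨x, hx⟩ : I)|
          ≤ ‖bernsteinApproximation n F - F‖ :=
            (bernsteinApproximation n F - F).norm_coe_le_norm _
        _ = dist (bernsteinApproximation n F) F := (dist_eq_norm _ _).symm
        _ ≤ ε/2 := hdist.le
    calc sSup ((fun x => |p.eval x - f x|) '' Set.Icc (0:ℝ) 1)
        ≤ ε/2 := Real.sSup_le hle (by positivity)
      _ < ε := by linarith
  · -- strict bounds
    intro x hx
    have hxI : x ∈ Set.Icc (0:ℝ) 1 := Set.Ioo_subset_Icc_self hx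
    have hb_nonneg : ∀ k : Fin (n+1), 0 ≤ (bernsteinPolynomial ℝ n k).eval x := by
      intro k
      have := bernstein_nonneg (n := n) (ν := k) (x := ⟨x, hxI⟩)
      simpa [bernstein, Polynomial.toContinuousMapOn_apply,
        Polynomial.toContinuousMap_apply] using this
    have hc : ∀ k : Fin (n+1), f ((k:ℝ)/n) ∈ Set.Icc (0:ℝ) 1 := by
      intro k
      apply hf01
      have := (bernstein.z k).2
      rwa [hz k] at this
    have hterm_nonneg : ∀ k : Fin (n+1),
        0 ≤ f ((k:ℝ)/n) * (bernsteinPolynomial ℝ n k).eval x :=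
      fun k => mul_nonneg (hc k).1 (hb_nonneg k)
    have hn0 : (n:ℝ) ≠ 0 := Nat.cast_ne_zero.mpr (by omega)
    have hlastc : f (((Fin.last n : Fin (n+1)):ℝ)/n) = 1 := by
      have h1 : (((Fin.last n : Fin (n+1)):ℝ)/n) = 1 := by
        rw [Fin.val_last]; exact div_self hn0
      rw [h1, hf1]
    have hlastb : (bernsteinPolynomial ℝ n (Fin.last n)).eval x = x ^ n := by
      simp [bernsteinPolynomial, Fin.val_last]
    have hzerob : (bernsteinPolynomial ℝ n (0 : Fin (n+1))).eval x = (1-x) ^ n := by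
      simp [bernsteinPolynomial]
    constructor
    · have : f (((Fin.last n : Fin (n+1)):ℝ)/n) * (bernsteinPolynomial ℝ n (Fin.last n)).eval x
          ≤ p.eval x := by
        rw [hpeval]
        exact Finset.single_le_sum (fun k _ => hterm_nonneg k) (Finset.mem_univ _)
      rw [hlastc, hlastb, one_mul] at this
      have hxn : 0 < x ^ n := pow_pos hx.1 n
      linarith
    · have hsum1 : (∑ k : Fin (n+1), (bernsteinPolynomial ℝ n k).eval x) = 1 := by
        have := bernsteinPolynomial.sum ℝ n
        apply_fun (Polynomial.eval x) at this
        simpa [Polynomial.eval_finset_sum, Finset.sum_range] using this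
      have key : 1 - p.eval x
          = ∑ k : Fin (n+1), (1 - f ((k:ℝ)/n)) * (bernsteinPolynomial ℝ n k).eval x := by
        rw [hpeval]
        simp [sub_mul, Finset.sum_sub_distrib, hsum1]
      have hterm2 : ∀ k : Fin (n+1),
          0 ≤ (1 - f ((k:ℝ)/n)) * (bernsteinPolynomial ℝ n k).eval x :=
        fun k => mul_nonneg (by linarith [(hc k).2]) (hb_nonneg k)
      have hzeroc : f (((0 : Fin (n+1)):ℝ)/n) = 0 := by
        norm_num [hf0]
      have : (1 - f (((0 : Fin (n+1)):ℝ)/n)) * (bernsteinPolynomial ℝ n (0:Fin (n+1))).eval x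
          ≤ 1 - p.eval x := by
        rw [key]
        exact Finset.single_le_sum (fun k _ => hterm2 k) (Finset.mem_univ _)
      rw [hzeroc, hzerob, sub_zero, one_mul] at this
      have : 0 < (1-x) ^ n := pow_pos (by linarith [hx.2]) n
      linarith
  · rw [hpeval]
    have : ∀ k : Fin (n+1),
        f ((k:ℝ)/n) * (bernsteinPolynomial ℝ n k).eval 0
        = if (k:ℕ) = 0 then f ((k:ℝ)/n) else 0 := by
      intro k
      rw [bernsteinPolynomial.eval_at_0]
      split <;> simp
    simp only [this]
    rw [Finset.sum_eq_single (0 : Fin (n+1))]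
    · simp [hf0]
    · intro k _ hk
      rw [if_neg]
      exact fun h => hk (Fin.ext (by simpa using h))
    · intro h; exact absurd (Finset.mem_univ _) h
  · rw [hpeval]
    have : ∀ k : Fin (n+1),
        f ((k:ℝ)/n) * (bernsteinPolynomial ℝ n k).eval 1
        = if (k:ℕ) = n then f ((k:ℝ)/n) else 0 := by
      intro k
      rw [bernsteinPolynomial.eval_at_1]
      split <;> simp
    simp only [this]
    rw [Finset.sum_eq_single (Fin.last n)]
    · have hn0 : (n:ℝ) ≠ 0 := Nat.cast_ne_zero.mpr (by omega)
      rw [if_pos (Fin.val_last n)]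
      rw [Fin.val_last, div_self hn0, hf1]
    · intro k _ hk
      rw [if_neg]
      exact fun h => hk (Fin.ext (by simpa using h))
    · intro h; exact absurd (Finset.mem_univ _) h
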